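/- arXiv:1503.07859 — 2 statements merged into one kernel-verified Lean document; each statement's English description precedes it below -/
import Mathlib

section
/- Ellipses with distinct eccentricities are not similar: for 0 < b < a and 0 < b' < a', if the ellipses x²/a² + y²/b² = 1 and x²/a'² + y²/b'² = 1 are related by a similarity transformation of ℝ², then b/a = b'/a'. -/
private lemma dist_sq_eq (p q : EuclideanSpace ℝ (Fin 2)) :
    dist p q ^ 2 = (p 0 - q 0) ^ 2 + (p 1 - q 1) ^ 2 := by
  rw [EuclideanSpace.dist_eq, Real.sq_sqrt (Finset.sum_nonneg fun i _ => sq_nonneg _)]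
  simp [Fin.sum_univ_two, Real.dist_eq, sq_abs]

private lemma sq_eq_of_nonneg {x y : ℝ} (hx : 0 ≤ x) (hy : 0 ≤ y) (h : x ^ 2 = y ^ 2) : x = y := by
  nlinarith [sq_nonneg (x - y), sq_nonneg (x + y)]

/-- On the ellipse, B² ≤ x²+y² ≤ A². -/
private lemma norm_bounds (A B x y : ℝ) (hB : 0 < B) (hAB : B < A)
    (h : x ^ 2 * B ^ 2 + y ^ 2 * A ^ 2 = A ^ 2 * B ^ 2) :
    B ^ 2 ≤ x ^ 2 + y ^ 2 ∧ x ^ 2 + y ^ 2 ≤ A ^ 2 := by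
  have hA : 0 < A := hB.trans hAB
  have hAB2 : B ^ 2 ≤ A ^ 2 := by nlinarith
  constructor
  · nlinarith [mul_nonneg (sq_nonneg x) (sub_nonneg.2 hAB2), sq_nonneg A,
      mul_pos hA hA, sq_nonneg x, sq_nonneg y]
  · nlinarith [mul_nonneg (sq_nonneg y) (sub_nonneg.2 hAB2), mul_pos hB hB,
      sq_nonneg x, sq_nonneg y]

/-- Diameter bound: squared distance between two ellipse points is ≤ 4A². -/
private lemma diam_ub (A B x1 y1 x2 y2 : ℝ) (hB : 0 < B) (hAB : B < A)
    (h1 : x1 ^ 2 * B ^ 2 + y1 ^ 2 * A ^ 2 = A ^ 2 * B ^ 2)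
    (h2 : x2 ^ 2 * B ^ 2 + y2 ^ 2 * A ^ 2 = A ^ 2 * B ^ 2) :
    (x1 - x2) ^ 2 + (y1 - y2) ^ 2 ≤ 4 * A ^ 2 := by
  obtain ⟨_, n1⟩ := norm_bounds A B x1 y1 hB hAB h1
  obtain ⟨_, n2⟩ := norm_bounds A B x2 y2 hB hAB h2
  nlinarith [sq_nonneg (x1 * y2 - x2 * y1), sq_nonneg (x1 * x2 + y1 * y2 + A ^ 2),
    sq_nonneg (x1 + x2), sq_nonneg (y1 + y2)]

/-- Equality case: two ellipse points at distance exactly 2A are antipodal of norm A. -/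
private lemma diam_eq_case (A B x1 y1 x2 y2 : ℝ) (hB : 0 < B) (hAB : B < A)
    (h1 : x1 ^ 2 * B ^ 2 + y1 ^ 2 * A ^ 2 = A ^ 2 * B ^ 2)
    (h2 : x2 ^ 2 * B ^ 2 + y2 ^ 2 * A ^ 2 = A ^ 2 * B ^ 2)
    (hd : (x1 - x2) ^ 2 + (y1 - y2) ^ 2 = 4 * A ^ 2) :
    x2 = -x1 ∧ y2 = -y1 ∧ x1 ^ 2 + y1 ^ 2 = A ^ 2 := by
  obtain ⟨_, n1⟩ := norm_bounds A B x1 y1 hB hAB h1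
  obtain ⟨_, n2⟩ := norm_bounds A B x2 y2 hB hAB h2
  have hz : (x1 + x2) ^ 2 + (y1 + y2) ^ 2 ≤ 0 := by nlinarith
  have hx : x1 + x2 = 0 := by nlinarith [sq_nonneg (x1 + x2), sq_nonneg (y1 + y2)]
  have hy : y1 + y2 = 0 := by nlinarith [sq_nonneg (x1 + x2), sq_nonneg (y1 + y2)]
  refine ⟨by linarith, by linarith, by nlinarith⟩

set_option maxHeartbeats 1000000 in
/-- Ellipses with distinct eccentricities are not similar. -/
theorem ellipses_similar_iff (a b a' b' : ℝ) (hb : 0 < b) (hba : b < a)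
    (hb' : 0 < b') (hba' : b' < a')
    (f : EuclideanSpace ℝ (Fin 2) → EuclideanSpace ℝ (Fin 2)) (r : ℝ) (hr : 0 < r)
    (hf : ∀ p q, dist (f p) (f q) = r * dist p q)
    (himg : f '' {p : EuclideanSpace ℝ (Fin 2) | (p 0) ^ 2 / a ^ 2 + (p 1) ^ 2 / b ^ 2 = 1}
        = {p : EuclideanSpace ℝ (Fin 2) | (p 0) ^ 2 / a' ^ 2 + (p 1) ^ 2 / b' ^ 2 = 1}) :
    b / a = b' / a' := by
  have ha : 0 < a := hb.trans hba
  have ha' : 0 < a' := hb'.trans hba'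
  -- cleared-denominator forms of membership
  have mem1 : ∀ p : EuclideanSpace ℝ (Fin 2),
      (p 0) ^ 2 / a ^ 2 + (p 1) ^ 2 / b ^ 2 = 1 ↔
      (p 0) ^ 2 * b ^ 2 + (p 1) ^ 2 * a ^ 2 = a ^ 2 * b ^ 2 := by
    intro p
    rw [div_add_div _ _ (by positivity) (by positivity), div_eq_one_iff_eq (by positivity)]
    constructor <;> intro h <;> linarith
  have mem2 : ∀ p : EuclideanSpace ℝ (Fin 2),
      (p 0) ^ 2 / a' ^ 2 + (p 1) ^ 2 / b' ^ 2 = 1 ↔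
      (p 0) ^ 2 * b' ^ 2 + (p 1) ^ 2 * a' ^ 2 = a' ^ 2 * b' ^ 2 := by
    intro p
    rw [div_add_div _ _ (by positivity) (by positivity), div_eq_one_iff_eq (by positivity)]
    constructor <;> intro h <;> linarith
  set E1 : Set (EuclideanSpace ℝ (Fin 2)) :=
    {p | (p 0) ^ 2 / a ^ 2 + (p 1) ^ 2 / b ^ 2 = 1} with hE1
  set E2 : Set (EuclideanSpace ℝ (Fin 2)) :=
    {p | (p 0) ^ 2 / a' ^ 2 + (p 1) ^ 2 / b' ^ 2 = 1} with hE2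
  -- the major-axis endpoints of E1
  set p₀ : EuclideanSpace ℝ (Fin 2) := !₂[a, 0] with hp₀def
  set p₁ : EuclideanSpace ℝ (Fin 2) := !₂[-a, 0] with hp₁def
  set q₂ : EuclideanSpace ℝ (Fin 2) := !₂[0, b] with hq₂def
  have hp₀0 : p₀ 0 = a := rfl
  have hp₀1 : p₀ 1 = 0 := rfl
  have hp₁0 : p₁ 0 = -a := rfl
  have hp₁1 : p₁ 1 = 0 := rfl
  have hq₂0 : q₂ 0 = 0 := rfl
  have hq₂1 : q₂ 1 = b := rfl
  have hp₀E : p₀ ∈ E1 := by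
    show (p₀ 0) ^ 2 / a ^ 2 + (p₀ 1) ^ 2 / b ^ 2 = 1
    rw [hp₀0, hp₀1]; field_simp; simp
  have hp₁E : p₁ ∈ E1 := by
    show (p₁ 0) ^ 2 / a ^ 2 + (p₁ 1) ^ 2 / b ^ 2 = 1
    rw [hp₁0, hp₁1]; field_simp; simp
  have hq₂E : q₂ ∈ E1 := by
    show (q₂ 0) ^ 2 / a ^ 2 + (q₂ 1) ^ 2 / b ^ 2 = 1
    rw [hq₂0, hq₂1]; field_simp; simp
  -- images
  have hP : f p₀ ∈ E2 := himg ▸ ⟨p₀, hp₀E, rfl⟩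
  have hQ : f p₁ ∈ E2 := himg ▸ ⟨p₁, hp₁E, rfl⟩
  have hS : f q₂ ∈ E2 := himg ▸ ⟨q₂, hq₂E, rfl⟩
  set P := f p₀
  set Q := f p₁
  set S := f q₂
  have hPe : (P 0) ^ 2 * b' ^ 2 + (P 1) ^ 2 * a' ^ 2 = a' ^ 2 * b' ^ 2 := (mem2 P).mp hP
  have hQe : (Q 0) ^ 2 * b' ^ 2 + (Q 1) ^ 2 * a' ^ 2 = a' ^ 2 * b' ^ 2 := (mem2 Q).mp hQ
  have hSe : (S 0) ^ 2 * b' ^ 2 + (S 1) ^ 2 * a' ^ 2 = a' ^ 2 * b' ^ 2 := (mem2 S).mp hS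
  -- squared distances scale by r²
  have hfsq : ∀ p q, dist (f p) (f q) ^ 2 = r ^ 2 * dist p q ^ 2 := by
    intro p q; rw [hf]; ring
  -- dist p₀ p₁ squared is 4a²
  have hd01 : dist p₀ p₁ ^ 2 = 4 * a ^ 2 := by
    rw [dist_sq_eq, hp₀0, hp₀1, hp₁0, hp₁1]; ring
  -- step 1 : dist(P,Q)² = 4r²a² ≤ 4a'²
  have hPQ : dist P Q ^ 2 = 4 * (r ^ 2 * a ^ 2) := by
    rw [hfsq, hd01]; ring
  have hPQ' : (P 0 - Q 0) ^ 2 + (P 1 - Q 1) ^ 2 = 4 * (r ^ 2 * a ^ 2) := by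
    rw [← dist_sq_eq]; exact hPQ
  have h1 : 4 * (r ^ 2 * a ^ 2) ≤ 4 * a' ^ 2 := by
    rw [← hPQ']
    exact diam_ub a' b' (P 0) (P 1) (Q 0) (Q 1) hb' hba' hPe hQe
  -- step 2 : the vertices of E2 are images, giving 4a'² ≤ 4r²a²
  have hv₀ : (!₂[a', 0] : EuclideanSpace ℝ (Fin 2)) ∈ E2 := by
    show (a') ^ 2 / a' ^ 2 + (0:ℝ) ^ 2 / b' ^ 2 = 1
    field_simp; simp
  have hv₁ : (!₂[-a', 0] : EuclideanSpace ℝ (Fin 2)) ∈ E2 := by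
    show (-a') ^ 2 / a' ^ 2 + (0:ℝ) ^ 2 / b' ^ 2 = 1
    field_simp; simp
  obtain ⟨u, huE, hu⟩ : (!₂[a', 0] : EuclideanSpace ℝ (Fin 2)) ∈ f '' E1 := himg ▸ hv₀
  obtain ⟨v, hvE, hv⟩ : (!₂[-a', 0] : EuclideanSpace ℝ (Fin 2)) ∈ f '' E1 := himg ▸ hv₁
  have hue : (u 0) ^ 2 * b ^ 2 + (u 1) ^ 2 * a ^ 2 = a ^ 2 * b ^ 2 := (mem1 u).mp huE
  have hve : (v 0) ^ 2 * b ^ 2 + (v 1) ^ 2 * a ^ 2 = a ^ 2 * b ^ 2 := (mem1 v).mp hvE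
  have hduv : dist (f u) (f v) ^ 2 = 4 * a' ^ 2 := by
    rw [hu, hv, dist_sq_eq]
    show (a' - -a') ^ 2 + ((0:ℝ) - 0) ^ 2 = 4 * a' ^ 2
    ring
  have h2 : 4 * a' ^ 2 ≤ 4 * (r ^ 2 * a ^ 2) := by
    rw [← hduv, hfsq]
    have := diam_ub a b (u 0) (u 1) (v 0) (v 1) hb hba hue hve
    have hd : dist u v ^ 2 ≤ 4 * a ^ 2 := by rw [dist_sq_eq]; exact this
    have := mul_le_mul_of_nonneg_left hd (sq_nonneg r)
    linarith
  have hra : r ^ 2 * a ^ 2 = a' ^ 2 := by linarith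
  -- step 3 : P, Q are antipodal with norm a'
  have hPQ4 : (P 0 - Q 0) ^ 2 + (P 1 - Q 1) ^ 2 = 4 * a' ^ 2 := by rw [hPQ', hra]
  obtain ⟨hQ0, hQ1, hPn⟩ :=
    diam_eq_case a' b' (P 0) (P 1) (Q 0) (Q 1) hb' hba' hPe hQe hPQ4
  -- step 4 : use S = f q₂ to get r²b² ≥ b'²
  have hd0q : dist p₀ q₂ ^ 2 = a ^ 2 + b ^ 2 := by
    rw [dist_sq_eq, hp₀0, hp₀1, hq₂0, hq₂1]; ring
  have hd1q : dist p₁ q₂ ^ 2 = a ^ 2 + b ^ 2 := by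
    rw [dist_sq_eq, hp₁0, hp₁1, hq₂0, hq₂1]; ring
  have hsum : (P 0 - S 0) ^ 2 + (P 1 - S 1) ^ 2 + ((Q 0 - S 0) ^ 2 + (Q 1 - S 1) ^ 2)
      = r ^ 2 * (2 * a ^ 2 + 2 * b ^ 2) := by
    rw [← dist_sq_eq, ← dist_sq_eq, hfsq, hfsq, hd0q, hd1q]; ring
  obtain ⟨hSlb, -⟩ := norm_bounds a' b' (S 0) (S 1) hb' hba' hSe
  rw [hQ0, hQ1] at hsum
  have hsum' : 2 * ((P 0) ^ 2 + (P 1) ^ 2) + 2 * ((S 0) ^ 2 + (S 1) ^ 2)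
      = r ^ 2 * (2 * a ^ 2 + 2 * b ^ 2) := by linear_combination hsum
  have h3 : b' ^ 2 ≤ r ^ 2 * b ^ 2 := by linarith only [hsum', hPn, hSlb, hra]
  -- step 5 : use preimage w of (0,b') to get r²b² ≤ b'²
  have hv₂ : (!₂[0, b'] : EuclideanSpace ℝ (Fin 2)) ∈ E2 := by
    show (0:ℝ) ^ 2 / a' ^ 2 + (b') ^ 2 / b' ^ 2 = 1
    field_simp; simp
  obtain ⟨w, hwE, hw⟩ : (!₂[0, b'] : EuclideanSpace ℝ (Fin 2)) ∈ f '' E1 := himg ▸ hv₂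
  have hwe : (w 0) ^ 2 * b ^ 2 + (w 1) ^ 2 * a ^ 2 = a ^ 2 * b ^ 2 := (mem1 w).mp hwE
  obtain ⟨hwlb, -⟩ := norm_bounds a b (w 0) (w 1) hb hba hwe
  have hsum2 : (P 0 - 0) ^ 2 + (P 1 - b') ^ 2 + ((Q 0 - 0) ^ 2 + (Q 1 - b') ^ 2)
      = r ^ 2 * (dist p₀ w ^ 2 + dist p₁ w ^ 2) := by
    have e1 : (P 0 - 0) ^ 2 + (P 1 - b') ^ 2 = dist P (f w) ^ 2 := by
      rw [dist_sq_eq, hw]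
      show (P 0 - 0) ^ 2 + (P 1 - b') ^ 2 = (P 0 - 0) ^ 2 + (P 1 - b') ^ 2
      rfl
    have e2 : (Q 0 - 0) ^ 2 + (Q 1 - b') ^ 2 = dist Q (f w) ^ 2 := by
      rw [dist_sq_eq, hw]
      show (Q 0 - 0) ^ 2 + (Q 1 - b') ^ 2 = (Q 0 - 0) ^ 2 + (Q 1 - b') ^ 2
      rfl
    rw [e1, e2, hfsq, hfsq]; ring
  have hdist01w : dist p₀ w ^ 2 + dist p₁ w ^ 2 = 2 * (w 0) ^ 2 + 2 * (w 1) ^ 2 + 2 * a ^ 2 := by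
    rw [dist_sq_eq, dist_sq_eq, hp₀0, hp₀1, hp₁0, hp₁1]; ring
  have h4 : r ^ 2 * b ^ 2 ≤ b' ^ 2 := by
    have lhs : (P 0 - 0) ^ 2 + (P 1 - b') ^ 2 + ((Q 0 - 0) ^ 2 + (Q 1 - b') ^ 2)
        = 2 * a' ^ 2 + 2 * b' ^ 2 := by
      rw [hQ0, hQ1]; linear_combination 2 * hPn
    rw [lhs, hdist01w] at hsum2
    have := mul_le_mul_of_nonneg_left hwlb (sq_nonneg r)
    linarith only [this, hra, hsum2]
  have hrb : r ^ 2 * b ^ 2 = b' ^ 2 := le_antisymm h4 h3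
  -- conclude
  have hae : r * a = a' := by
    apply sq_eq_of_nonneg (by positivity) ha'.le
    rw [mul_pow]; exact hra
  have hbe : r * b = b' := by
    apply sq_eq_of_nonneg (by positivity) hb'.le
    rw [mul_pow]; exact hrb
  rw [← hae, ← hbe]
  field_simp
end

section
/- For a squarefree positive integer n, n is a congruent number (the area of a right triangle with rational sides) if and only if the elliptic curve y² = x³ - n²x has a rational point (x, y) with y ≠ 0. -/
/-- `n` is a congruent number: the area of a right triangle with rational sides. -/
def IsCongruentNumber (n : ℕ) : Prop :=
  ∃ a b c : ℚ, 0 < a ∧ 0 < b ∧ 0 < c ∧ a ^ 2 + b ^ 2 = c ^ 2 ∧ a * b / 2 = n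

/-- A squarefree positive `n` is a congruent number iff `y² = x³ - n²x` has a rational
point with `y ≠ 0`. -/
theorem congruent_iff_rational_point (n : ℕ) (hn : 0 < n) (hsf : Squarefree n) :
    IsCongruentNumber n ↔ ∃ x y : ℚ, y ≠ 0 ∧ y ^ 2 = x ^ 3 - (n : ℚ) ^ 2 * x := by
  constructor
  · rintro ⟨a, b, c, ha, hb, hc, habc, harea⟩
    refine ⟨(c / 2) ^ 2, c * (a ^ 2 - b ^ 2) / 8, ?_, ?_⟩
    · have hab : a ≠ b := by
        intro h
        subst h
        have h2 : (c / a) ^ 2 = 2 := by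
          field_simp
          linarith [habc]
        have h2' : ((|c / a| : ℚ) : ℝ) ^ 2 = 2 := by
          push_cast
          rw [sq_abs]
          exact_mod_cast h2
        have hq : ((|c / a| : ℚ) : ℝ) = Real.sqrt 2 := by
          rw [← h2', Real.sqrt_sq (by positivity)]
        exact irrational_sqrt_two ⟨|c / a|, hq⟩
      have : a ^ 2 ≠ b ^ 2 := fun h => hab (by nlinarith)
      have hc0 : c ≠ 0 := ne_of_gt hc
      intro h
      apply this
      have := mul_eq_zero.mp (by linarith [h] : c * (a ^ 2 - b ^ 2) = 0)
      rcases this with h1 | h1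
      · exact absurd h1 hc0
      · linarith
    · rw [← harea]
      linear_combination (c ^ 2 * (a ^ 2 + b ^ 2 + c ^ 2) / 64) * habc
  · rintro ⟨x, y, hy, heq⟩
    have hn' : (0 : ℚ) < n := by exact_mod_cast hn
    have hx : x ≠ 0 := by
      intro h; apply hy; have : y ^ 2 = 0 := by rw [heq, h]; ring
      exact pow_eq_zero_iff (by norm_num) |>.mp this
    have hx2 : x ^ 2 - (n : ℚ) ^ 2 ≠ 0 := by
      intro h; apply hy
      have : y ^ 2 = 0 := by rw [heq]; linear_combination x * h
      exact pow_eq_zero_iff (by norm_num) |>.mp this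
    refine ⟨|(x ^ 2 - (n : ℚ) ^ 2) / y|, |2 * n * x / y|, |(x ^ 2 + (n : ℚ) ^ 2) / y|,
      ?_, ?_, ?_, ?_, ?_⟩
    · exact abs_pos.mpr (div_ne_zero hx2 hy)
    · exact abs_pos.mpr (div_ne_zero (by positivity) hy)
    · exact abs_pos.mpr (div_ne_zero (by positivity) hy)
    · rw [sq_abs, sq_abs, sq_abs]
      field_simp
      ring
    · rw [← abs_mul, show |((x ^ 2 - (n : ℚ) ^ 2) / y * (2 * n * x / y))| / 2
        = |(x ^ 2 - (n : ℚ) ^ 2) / y * (2 * n * x / y) / 2| by rw [abs_div]; norm_num]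
      have : (x ^ 2 - (n : ℚ) ^ 2) / y * (2 * n * x / y) / 2 = n := by
        field_simp
        linear_combination (-1 : ℚ) * heq
      rw [this, abs_of_nonneg hn'.le]
end
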